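/- Lemma 1.1(c): There exists a unique chamber C₀' in X relative to R such that −ω lies in the closure of C₀' and C̃₀ = C̃₀'. Moreover {α ∈ R^+ : ker α separates C₀ and C₀'} = R^+ ∖ R^+_ω; in particular l_R(C₀, C₀') = |R^+| − |R^+_ω|. -/

import Mathlib

open Pointwise
open scoped Classical

namespace GKM

variable {V : Type*} [AddCommGroup V] [Module ℝ V]

/-- The dual cone `C* = {λ | λ ≥ 0 on C}` of a subset `C` of `V`. -/
def dualCone (C : Set V) : Set (Module.Dual ℝ V) := {l | ∀ x ∈ C, 0 ≤ l x}

/-- `C` is a closed convex polyhedral cone: the set of nonnegative linear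
combinations of a finite subset of `V`. -/
def IsPolyhedralCone (C : Set V) : Prop :=
  ∃ S : Finset V, C = {x | ∃ c : V → ℝ, (∀ v, 0 ≤ c v) ∧ x = ∑ v ∈ S, c v • v}

/-- `F` is a (closed) face of the cone `C`. -/
def IsFaceOf (F C : Set V) : Prop := ∃ l ∈ dualCone C, F = C ∩ {x | l x = 0}

/-- The dimension of (the linear span of) a subset of `V`. -/
noncomputable def sdim (F : Set V) : ℕ := Module.finrank ℝ (Submodule.span ℝ F)

/-- `ℤ`-valued characteristic function `ξ_S`. -/
noncomputable def ind {α : Type*} (S : Set α) (a : α) : ℤ := if a ∈ S then 1 else 0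

/-- `ψ_C(x,λ) = Σ_{F face of C} (−1)^{dim F} ξ_{(F^⊥)*}(x) · ξ_{F*}(λ)`,
where `(F^⊥)* = C + span F` and `F*` is the dual cone of `F`. -/
noncomputable def psi (C : Set V) (x : V) (l : Module.Dual ℝ V) : ℤ :=
  ∑ᶠ F ∈ {F : Set V | IsFaceOf F C},
    (-1 : ℤ) ^ sdim F * ind (C + (Submodule.span ℝ F : Set V)) x * ind (dualCone F) l

/-- `x` is regular for the hyperplane arrangement `{ker α | α ∈ S}`. -/
def IsRegular (S : Set (Module.Dual ℝ V)) (x : V) : Prop := ∀ α ∈ S, α x ≠ 0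

/-- `C` is a chamber of the arrangement `{ker α | α ∈ S}`: a connected component of
the set of regular points, equivalently (for a finite arrangement, which is the case
throughout) a nonempty maximal subset on which each `α ∈ S` has constant sign. -/
def IsChamber (S : Set (Module.Dual ℝ V)) (C : Set V) : Prop :=
  ∃ x, IsRegular S x ∧ C = {y | ∀ α ∈ S, 0 < α x * α y}

/-- The closure of a chamber, described combinatorially (for a chamber of a finite
hyperplane arrangement this coincides with the topological closure). -/
def chClosure (S : Set (Module.Dual ℝ V)) (C : Set V) : Set V :=
  {y | ∀ α ∈ S, ∀ x ∈ C, 0 ≤ α x * α y}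

/-- The hyperplane `ker α` separates `C₁` and `C₂`. -/
def Separates (α : Module.Dual ℝ V) (C₁ C₂ : Set V) : Prop :=
  ∀ x₁ ∈ C₁, ∀ x₂ ∈ C₂, α x₁ * α x₂ < 0

/-- `l(C₁,C₂)`: the number of hyperplanes of the arrangement separating `C₁`,`C₂`. -/
noncomputable def sep (S : Set (Module.Dual ℝ V)) (C₁ C₂ : Set V) : ℕ :=
  {H : Set V | ∃ α ∈ S, H = {x | α x = 0} ∧ Separates α C₁ C₂}.ncard

/-- `ε(C₁,C₂) = (−1)^{l(C₁,C₂)}`. -/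
noncomputable def eps (S : Set (Module.Dual ℝ V)) (C₁ C₂ : Set V) : ℤ :=
  (-1) ^ sep S C₁ C₂

/-- `ψ_R(C₀,x,λ) = Σ_C ε(C₀,C) ψ_{C̄}(x,λ)`, the sum over all chambers `C`. -/
noncomputable def psiR (S : Set (Module.Dual ℝ V)) (C₀ : Set V) (x : V)
    (l : Module.Dual ℝ V) : ℤ :=
  ∑ᶠ C ∈ {C : Set V | IsChamber S C}, eps S C₀ C * psi (chClosure S C) x l

/-- `λ ∈ X*` is `R`-regular: it vanishes on no nonzero element of a 1-dimensional
face of the closure of a chamber in `X`. -/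
def RRegular (S : Set (Module.Dual ℝ V)) (l : Module.Dual ℝ V) : Prop :=
  ∀ C : Set V, IsChamber S C → ∀ F : Set V, IsFaceOf F (chClosure S C) →
    sdim F = 1 → ∀ ω ∈ F, ω ≠ (0 : V) → l ω ≠ 0

/-- `ω` is a nonzero element of a 1-dimensional face of the closure of `C₀`. -/
def InOneDimFaceOfClosure (S : Set (Module.Dual ℝ V)) (C₀ : Set V) (ω : V) : Prop :=
  ω ≠ 0 ∧ ∃ F : Set V, IsFaceOf F (chClosure S C₀) ∧ sdim F = 1 ∧ ω ∈ F

/-- `(X, X*, R, R∨)` is a (reduced, crystallographic) root system, `R ⊂ X*`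
spanning `X*`, with coroot `α∨ = coroot α ∈ X` for each `α ∈ R`. -/
structure IsRootSystem (R : Set (Module.Dual ℝ V)) (coroot : Module.Dual ℝ V → V) : Prop where
  finite : R.Finite
  ne_zero : ∀ α ∈ R, α ≠ 0
  span_top : Submodule.span ℝ R = ⊤
  root_coroot_two : ∀ α ∈ R, α (coroot α) = 2
  pairing_int : ∀ α ∈ R, ∀ β ∈ R, ∃ n : ℤ, β (coroot α) = (n : ℝ)
  reflect_root_mem : ∀ α ∈ R, ∀ β ∈ R, β - β (coroot α) • α ∈ R
  reflect_coroot : ∀ α ∈ R, ∀ β ∈ R,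
    coroot (β - β (coroot α) • α) = coroot β - α (coroot β) • coroot α
  reduced : ∀ α ∈ R, ∀ c : ℝ, c • α ∈ R → c = 1 ∨ c = -1

/-- The Weyl group `W(R)`, the subgroup of `GL(X)` generated by the reflections
`s_α : x ↦ x − α(x)·α∨`, `α ∈ R`. -/
def weylGroup (R : Set (Module.Dual ℝ V)) (coroot : Module.Dual ℝ V → V) :
    Subgroup (V ≃ₗ[ℝ] V) :=
  Subgroup.closure {w : V ≃ₗ[ℝ] V | ∃ α ∈ R, ∀ x, w x = x - α x • coroot α}

/-- The set `R⁺` of roots positive on the chamber `C`. -/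
def posRoots (R : Set (Module.Dual ℝ V)) (C : Set V) : Set (Module.Dual ℝ V) :=
  {α ∈ R | ∀ x ∈ C, 0 < α x}

/-- The root system `R_ω = {α ∈ R | α(ω) = 0}` viewed on the quotient `X/ℝω`:
the set of functionals on `X/ℝω` whose pullback to `X` lies in `R`
(such a pullback automatically kills `ω`, hence lies in `R_ω`). -/
def quotRoots (R : Set (Module.Dual ℝ V)) (ω : V) :
    Set (Module.Dual ℝ (V ⧸ Submodule.span ℝ ({ω} : Set V))) :=
  {β | β.comp (Submodule.span ℝ ({ω} : Set V)).mkQ ∈ R}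

/-- The root system `R_α` (roots `β` with `α(β∨) = 0`) restricted to the
hyperplane `Y = ker α`. -/
def subRoots (R : Set (Module.Dual ℝ V)) (coroot : Module.Dual ℝ V → V)
    (α : Module.Dual ℝ V) : Set (Module.Dual ℝ ↥(LinearMap.ker α)) :=
  {m | ∃ β ∈ R, α (coroot β) = 0 ∧ m = β.comp (LinearMap.ker α).subtype}


private lemma mul_pos_trans' {a b c : ℝ} (h1 : 0 < a * b) (h2 : 0 < a * c) :
    0 < b * c := by nlinarith [mul_pos h1 h2, sq_nonneg a]

private lemma dual_eq_smul' {V : Type*} [AddCommGroup V] [Module ℝ V]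
    (α β : Module.Dual ℝ V) {v : V} (hv : α v ≠ 0)
    (h : ∀ x, α x = 0 → β x = 0) : β = (β v / α v) • α := by
  ext x
  have hx : α (x - (α x / α v) • v) = 0 := by
    simp only [map_sub, map_smul, smul_eq_mul]
    field_simp
    ring
  have h2 := h _ hx
  simp only [map_sub, map_smul, smul_eq_mul, sub_eq_zero] at h2
  simp only [LinearMap.smul_apply, smul_eq_mul]
  rw [h2]
  ring

/-- **Lemma 1.1(c)**: there is a unique chamber `C₀'` with `−ω` in its closure and
`C̃₀ = C̃₀'`; moreover the positive roots whose hyperplanes separate `C₀, C₀'` are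
exactly `R⁺ \ R⁺_ω`, and `l(C₀,C₀') = |R⁺| − |R⁺_ω|`. -/
theorem lemma_1_1_c
    {V : Type*} [AddCommGroup V] [Module ℝ V] [FiniteDimensional ℝ V]
    (R : Set (Module.Dual ℝ V)) (coroot : Module.Dual ℝ V → V)
    (hRS : IsRootSystem R coroot)
    (C₀ : Set V) (hC₀ : IsChamber R C₀)
    (ω : V) (hωface : InOneDimFaceOfClosure R C₀ ω)
    (Rω RP RPω : Set (Module.Dual ℝ V))
    (hRω : Rω = {α ∈ R | α ω = 0})
    (hRP : RP = posRoots R C₀) (hRPω : RPω = Rω ∩ RP) :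
    -- existence and uniqueness of `C₀'`
    (∃! C' : Set V, IsChamber R C' ∧ (-ω) ∈ chClosure R C' ∧
        ∃ D : Set V, IsChamber Rω D ∧ C₀ ⊆ D ∧ C' ⊆ D) ∧
    -- the further properties of any such `C₀'`
    (∀ C' : Set V, IsChamber R C' → (-ω) ∈ chClosure R C' →
        (∃ D : Set V, IsChamber Rω D ∧ C₀ ⊆ D ∧ C' ⊆ D) →
        ({α ∈ RP | Separates α C₀ C'} = RP \ RPω) ∧
        (sep R C₀ C' : ℤ) = (RP.ncard : ℤ) - (RPω.ncard : ℤ)) := by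
  classical
  obtain ⟨hω0, F, ⟨l, hl, hFeq⟩, hFdim, hωF⟩ := hωface
  have hωcl : ω ∈ chClosure R C₀ := by rw [hFeq] at hωF; exact hωF.1
  obtain ⟨x₀, hx₀reg, hC₀eq⟩ := hC₀
  have hx₀C₀ : x₀ ∈ C₀ := by
    rw [hC₀eq]; intro α hα; exact mul_self_pos.mpr (hx₀reg α hα)
  have hmemC₀ : ∀ y ∈ C₀, ∀ α ∈ R, 0 < α x₀ * α y := by
    rw [hC₀eq]; exact fun y hy α hα => hy α hα
  have hωsign : ∀ α ∈ R, 0 < α x₀ → 0 ≤ α ω := by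
    intro α hα h
    have := hωcl α hα x₀ hx₀C₀
    nlinarith
  have hRωsub : ∀ α ∈ Rω, α ∈ R := by
    intro α hα; rw [hRω] at hα; exact hα.1
  have neg_root : ∀ α ∈ R, -α ∈ R := by
    intro α hα
    have h1 := hRS.reflect_root_mem α hα α hα
    have h2 : α - α (coroot α) • α = -α := by
      rw [hRS.root_coroot_two α hα]; module
    rwa [h2] at h1
  have hRPmem : ∀ α, α ∈ RP ↔ (α ∈ R ∧ 0 < α x₀) := by
    intro α
    rw [hRP]
    constructor
    · rintro ⟨hα, hpos⟩; exact ⟨hα, hpos x₀ hx₀C₀⟩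
    · rintro ⟨hα, hpos⟩
      refine ⟨hα, fun x hx => ?_⟩
      have := hmemC₀ x hx α hα
      nlinarith
  -- Part 2: properties of any valid C'
  have hmain : ∀ C' : Set V, IsChamber R C' → (-ω) ∈ chClosure R C' →
      (∃ D : Set V, IsChamber Rω D ∧ C₀ ⊆ D ∧ C' ⊆ D) →
      ({α ∈ RP | Separates α C₀ C'} = RP \ RPω) ∧
      (sep R C₀ C' : ℤ) = (RP.ncard : ℤ) - (RPω.ncard : ℤ) := by
    intro C' hC' hnegω hD
    obtain ⟨x', hx'reg, hC'eq⟩ := hC'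
    have hx'C' : x' ∈ C' := by
      rw [hC'eq]; intro α hα; exact mul_self_pos.mpr (hx'reg α hα)
    have hmemC' : ∀ y ∈ C', ∀ α ∈ R, 0 < α x' * α y := by
      rw [hC'eq]; exact fun y hy α hα => hy α hα
    obtain ⟨D, ⟨z, hzreg, hDeq⟩, hC₀D, hC'D⟩ := hD
    have hsignω : ∀ α ∈ R, α ω ≠ 0 → α x' * α ω < 0 := by
      intro α hα hαω
      have h1 := hnegω α hα x' hx'C'
      rw [map_neg] at h1
      have h2 : α x' ≠ 0 := hx'reg α hα
      rcases (mul_ne_zero h2 hαω).lt_or_gt with h | h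
      · exact h
      · nlinarith
    have hsignRω : ∀ α ∈ Rω, 0 < α x₀ * α x' := by
      intro α hα
      have h1 : 0 < α z * α x₀ := by
        have := hC₀D hx₀C₀
        rw [hDeq] at this
        exact this α hα
      have h2 : 0 < α z * α x' := by
        have := hC'D hx'C'
        rw [hDeq] at this
        exact this α hα
      exact mul_pos_trans' h1 h2
    have hseteq : {α ∈ RP | Separates α C₀ C'} = RP \ RPω := by
      ext α
      simp only [Set.mem_setOf_eq, Set.mem_diff]
      constructor
      · rintro ⟨hαRP, hsep⟩
        refine ⟨hαRP, fun hαRPω => ?_⟩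
        have hαRω : α ∈ Rω := by rw [hRPω] at hαRPω; exact hαRPω.1
        have h1 := hsignRω α hαRω
        have h2 := hsep x₀ hx₀C₀ x' hx'C'
        linarith
      · rintro ⟨hαRP, hnot⟩
        have hαR := ((hRPmem α).mp hαRP).1
        have hx₀pos := ((hRPmem α).mp hαRP).2
        have hαω : α ω ≠ 0 := by
          intro h0
          exact hnot (by rw [hRPω, hRω]; exact ⟨⟨hαR, h0⟩, hαRP⟩)
        refine ⟨hαRP, fun x₁ hx₁ x₂ hx₂ => ?_⟩
        have h1 : 0 < α x₁ := by
          rw [hRP] at hαRP; exact hαRP.2 x₁ hx₁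
        have h2 := hsignω α hαR hαω
        have h3 := hmemC' x₂ hx₂ α hαR
        have hω2 : 0 ≤ α ω := hωsign α hαR hx₀pos
        have hωpos : 0 < α ω := lt_of_le_of_ne hω2 (Ne.symm hαω)
        have hx'neg : α x' < 0 := by nlinarith
        have hx₂neg : α x₂ < 0 := by nlinarith
        exact mul_neg_of_pos_of_neg h1 hx₂neg
    have hRPfin : RP.Finite := hRS.finite.subset (by
      rw [hRP]; exact fun α hα => hα.1)
    have hRPωsub : RPω ⊆ RP := by rw [hRPω]; exact Set.inter_subset_right
    have hHset : {H : Set V | ∃ α ∈ R, H = {x | α x = 0} ∧ Separates α C₀ C'} =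
        (fun α : Module.Dual ℝ V => {x : V | α x = 0}) ''
          {α ∈ RP | Separates α C₀ C'} := by
      ext H
      simp only [Set.mem_setOf_eq, Set.mem_image]
      constructor
      · rintro ⟨α, hαR, rfl, hsep⟩
        rcases (hx₀reg α hαR).lt_or_gt with hneg | hpos
        · refine ⟨-α, ⟨(hRPmem (-α)).mpr ⟨neg_root α hαR, by
            simpa using hneg⟩, ?_⟩, ?_⟩
          · intro x₁ hx₁ x₂ hx₂
            have := hsep x₁ hx₁ x₂ hx₂
            simp only [LinearMap.neg_apply]
            nlinarith
          · ext x; simp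
        · exact ⟨α, ⟨(hRPmem α).mpr ⟨hαR, hpos⟩, hsep⟩, rfl⟩
      · rintro ⟨α, ⟨hαRP, hsep⟩, rfl⟩
        exact ⟨α, ((hRPmem α).mp hαRP).1, rfl, hsep⟩
    have hinj : Set.InjOn (fun α : Module.Dual ℝ V => {x : V | α x = 0})
        {α ∈ RP | Separates α C₀ C'} := by
      rintro α ⟨hαRP, -⟩ β ⟨hβRP, -⟩ hker
      have hα := (hRPmem α).mp hαRP
      have hβ := (hRPmem β).mp hβRP
      simp only at hker
      have hker' : ∀ x, α x = 0 → β x = 0 := by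
        intro x hx
        have hxm : x ∈ {x : V | α x = 0} := hx
        rw [hker] at hxm
        exact hxm
      have heq := dual_eq_smul' α β (ne_of_gt hα.2) hker'
      have hcR : (β x₀ / α x₀) • α ∈ R := by rw [← heq]; exact hβ.1
      rcases hRS.reduced α hα.1 _ hcR with h1 | h1
      · rw [heq, h1, one_smul]
      · exfalso
        rw [h1] at heq
        have hval : β x₀ = -α x₀ := by
          rw [heq]; simp
        linarith [hα.2, hβ.2]
    have hsep_eq : sep R C₀ C' = (RP \ RPω).ncard := by
      rw [sep, hHset, Set.ncard_image_of_injOn hinj, hseteq]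
    refine ⟨hseteq, ?_⟩
    have hRPωfin : RPω.Finite := hRPfin.subset hRPωsub
    rw [hsep_eq, Set.ncard_diff hRPωsub hRPωfin]
    have hle := Set.ncard_le_ncard hRPωsub hRPfin
    omega
  -- Existence: construct the chamber
  obtain ⟨B, hB⟩ := (hRS.finite.image fun α => |α x₀| / |α ω|).bddAbove
  set t : ℝ := B + 1 with ht
  have hbound : ∀ α ∈ R, α ω ≠ 0 → |α x₀| < t * |α ω| := by
    intro α hα hαω
    have h1 : |α x₀| / |α ω| ≤ B := hB ⟨α, hα, rfl⟩
    have h2 : 0 < |α ω| := abs_pos.mpr hαω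
    rw [div_le_iff₀ h2] at h1
    nlinarith
  set x' : V := x₀ - t • ω with hx'def
  have hval : ∀ α : Module.Dual ℝ V, α x' = α x₀ - t * α ω := by
    intro α; rw [hx'def]; simp
  have hsign' : ∀ α ∈ R, α ω ≠ 0 → α x' * α ω < 0 := by
    intro α hα hαω
    have h1 := hbound α hα hαω
    have h2 : α x₀ * α ω ≤ |α x₀| * |α ω| := by
      calc α x₀ * α ω ≤ |α x₀ * α ω| := le_abs_self _
      _ = |α x₀| * |α ω| := abs_mul _ _
    have h3 : |α ω| * |α ω| = α ω * α ω := by rw [← abs_mul, abs_mul_self]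
    have h4 := mul_lt_mul_of_pos_right h1 (abs_pos.mpr hαω)
    have h5 : t * |α ω| * |α ω| = t * (α ω * α ω) := by rw [mul_assoc, h3]
    rw [hval]
    nlinarith
  have hreg' : IsRegular R x' := by
    intro α hα
    by_cases hαω : α ω = 0
    · rw [hval, hαω, mul_zero, sub_zero]; exact hx₀reg α hα
    · intro h0
      have := hsign' α hα hαω
      rw [h0, zero_mul] at this
      exact lt_irrefl _ this
  set Cm : Set V := {y | ∀ α ∈ R, 0 < α x' * α y} with hCm
  have hCmcham : IsChamber R Cm := ⟨x', hreg', rfl⟩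
  have hx'Cm : x' ∈ Cm := fun α hα => mul_self_pos.mpr (hreg' α hα)
  have hCmcl : (-ω) ∈ chClosure R Cm := by
    intro α hα x hx
    rw [map_neg]
    by_cases hαω : α ω = 0
    · rw [hαω]; simp
    · have h1 := hsign' α hα hαω
      have h2 : 0 < α x' * α x := hx α hα
      have h3 : 0 < α x' * (-(α ω)) := by linarith
      have := mul_pos_trans' h2 h3
      nlinarith
  set Dm : Set V := {y | ∀ α ∈ Rω, 0 < α x₀ * α y} with hDm
  have hDmcham : IsChamber Rω Dm := ⟨x₀, fun α hα => hx₀reg α (hRωsub α hα), rfl⟩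
  have hC₀Dm : C₀ ⊆ Dm := fun y hy α hα => hmemC₀ y hy α (hRωsub α hα)
  have hCmDm : Cm ⊆ Dm := by
    intro y hy α hα
    have h := hy α (hRωsub α hα)
    have hαω : α ω = 0 := by rw [hRω] at hα; exact hα.2
    rwa [hval, hαω, mul_zero, sub_zero] at h
  refine ⟨⟨Cm, ⟨hCmcham, hCmcl, Dm, hDmcham, hC₀Dm, hCmDm⟩, ?_⟩, hmain⟩
  rintro C'' ⟨⟨x'', hx''reg, rfl⟩, hcl'', D'', ⟨z, hzreg, rfl⟩, hC₀D'', hC''D''⟩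
  have hx''C : x'' ∈ {y | ∀ α ∈ R, 0 < α x'' * α y} :=
    fun α hα => mul_self_pos.mpr (hx''reg α hα)
  have hkey : ∀ α ∈ R, 0 < α x'' * α x' := by
    intro α hα
    by_cases hαω : α ω = 0
    · have hαRω : α ∈ Rω := by rw [hRω]; exact ⟨hα, hαω⟩
      have h1 : 0 < α z * α x₀ := hC₀D'' hx₀C₀ α hαRω
      have h2 : 0 < α z * α x'' := hC''D'' hx''C α hαRω
      have h3 : 0 < α x'' * α x₀ := mul_pos_trans' h2 h1
      rw [hval, hαω, mul_zero, sub_zero]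
      exact h3
    · have h1 := hsign' α hα hαω
      have h2 : α x'' * α ω < 0 := by
        have h3 := hcl'' α hα x'' hx''C
        rw [map_neg] at h3
        rcases (mul_ne_zero (hx''reg α hα) hαω).lt_or_gt with h | h
        · exact h
        · linarith
      nlinarith [mul_pos (neg_pos.2 h1) (neg_pos.2 h2), sq_nonneg (α ω)]
  ext y
  simp only [Set.mem_setOf_eq, hCm]
  constructor
  · intro hy α hα
    exact mul_pos_trans' (hkey α hα) (hy α hα)
  · intro hy α hα
    have h := hkey α hα
    rw [mul_comm] at h
    exact mul_pos_trans' h (hy α hα)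

end GKM
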